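/- Let s'' and s̃ be reals with 0 < s'' < s̃, and let d̃ : Σ^* → [0,∞) be a martingale. Suppose X ∈ Σ^∞ satisfies limsup_{n→∞} d̃(X↾n) / 2^{(1−s'')·n} = ∞. Then there exist infinitely many n ∈ ℕ satisfying at least one of the following: (1) d̃(X↾2^n) > 2^{(1−s̃)·2^{n−1}}·d̃(X↾2^{n−1}); (2) there exists ℓ ∈ ℕ with ((s̃−s'')/s'')·2^{n−1} ≤ ℓ ≤ 2^{n−1} such that d̃(X↾(2^{n−1}+ℓ)) > 2^{(1−s'')·(2^{n−1}+ℓ)}. -/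

import Mathlib

open Filter MeasureTheory

/-- The first `n` bits of an infinite binary sequence, as a finite string. -/
def pre (X : ℕ → Bool) (n : ℕ) : List Bool := List.ofFn (fun i : Fin n => X i)

lemma pre_succ (X : ℕ → Bool) (m : ℕ) : pre X (m + 1) = pre X m ++ [X m] := by
  rw [pre, List.ofFn_succ', List.concat_eq_append]
  simp [pre, Fin.coe_castSucc]

lemma d_step (d : List Bool → ℝ) (hnonneg : ∀ w, 0 ≤ d w)
    (hmart : ∀ w, d (w ++ [false]) + d (w ++ [true]) = 2 * d w)
    (X : ℕ → Bool) (m : ℕ) : d (pre X (m + 1)) ≤ 2 * d (pre X m) := by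
  have h := hmart (pre X m)
  have h0 := hnonneg (pre X m ++ [false])
  have h1 := hnonneg (pre X m ++ [true])
  rw [pre_succ]
  cases X m <;> linarith

lemma d_add (d : List Bool → ℝ) (hnonneg : ∀ w, 0 ≤ d w)
    (hmart : ∀ w, d (w ++ [false]) + d (w ++ [true]) = 2 * d w)
    (X : ℕ → Bool) (m : ℕ) : ∀ k, d (pre X (m + k)) ≤ 2 ^ k * d (pre X m) := by
  intro k
  induction k with
  | zero => simp
  | succ k ih =>
    have h1 := d_step d hnonneg hmart X (m + k)
    have h2 : (0:ℝ) ≤ (2:ℝ) ^ k := by positivity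
    have hd := hnonneg (pre X m)
    calc d (pre X (m + (k+1))) ≤ 2 * d (pre X (m + k)) := h1
      _ ≤ 2 * ((2:ℝ) ^ k * d (pre X m)) := by nlinarith
      _ = (2:ℝ) ^ (k+1) * d (pre X m) := by ring

theorem martingale_growth_dichotomy
    (s'' st : ℝ) (h0 : 0 < s'') (hst : s'' < st)
    (d : List Bool → ℝ) (hnonneg : ∀ w, 0 ≤ d w)
    (hmart : ∀ w, d (w ++ [false]) + d (w ++ [true]) = 2 * d w)
    (X : ℕ → Bool)
    (hX : ∀ C : ℝ, ∃ᶠ n in atTop, C < d (pre X n) / 2 ^ ((1 - s'') * (n : ℝ))) :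
    ∃ᶠ n : ℕ in atTop,
      (2 ^ ((1 - st) * (2 : ℝ) ^ (n - 1)) * d (pre X (2 ^ (n - 1))) < d (pre X (2 ^ n))) ∨
      (∃ ℓ : ℕ, ((st - s'') / s'') * (2 : ℝ) ^ (n - 1) ≤ (ℓ : ℝ) ∧ ℓ ≤ 2 ^ (n - 1) ∧
        2 ^ ((1 - s'') * ((2 : ℝ) ^ (n - 1) + (ℓ : ℝ))) < d (pre X (2 ^ (n - 1) + ℓ))) := by
  by_contra hcon
  rw [Filter.not_frequently, Filter.eventually_atTop] at hcon
  obtain ⟨N0, hN0⟩ := hcon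
  set N : ℕ := max N0 1 with hNdef
  have hN : ∀ n, N ≤ n → ¬ ((2 ^ ((1 - st) * (2 : ℝ) ^ (n - 1)) * d (pre X (2 ^ (n - 1))) < d (pre X (2 ^ n))) ∨
      (∃ ℓ : ℕ, ((st - s'') / s'') * (2 : ℝ) ^ (n - 1) ≤ (ℓ : ℝ) ∧ ℓ ≤ 2 ^ (n - 1) ∧
        2 ^ ((1 - s'') * ((2 : ℝ) ^ (n - 1) + (ℓ : ℝ))) < d (pre X (2 ^ (n - 1) + ℓ)))) :=
    fun n hn => hN0 n (le_trans (le_max_left _ _) hn)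
  set D : ℝ := d (pre X (2 ^ N)) with hDdef
  have hD : 0 ≤ D := hnonneg _
  -- bound at powers of two
  have hpow : ∀ n, N ≤ n → d (pre X (2 ^ n)) ≤ 2 ^ ((1 - st) * ((2:ℝ) ^ n - (2:ℝ) ^ N)) * D := by
    intro n hn
    induction n, hn using Nat.le_induction with
    | base => simp [hDdef]
    | succ n hn ih =>
      have hA := (not_or.mp (hN (n + 1) (by omega))).1
      push_neg at hA
      simp only [Nat.add_sub_cancel] at hA
      calc d (pre X (2 ^ (n + 1)))
          ≤ 2 ^ ((1 - st) * (2:ℝ) ^ n) * d (pre X (2 ^ n)) := hA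
        _ ≤ 2 ^ ((1 - st) * (2:ℝ) ^ n) * (2 ^ ((1 - st) * ((2:ℝ) ^ n - (2:ℝ) ^ N)) * D) := by
            exact mul_le_mul_of_nonneg_left ih (Real.rpow_nonneg (by norm_num) _)
        _ = 2 ^ ((1 - st) * ((2:ℝ) ^ (n + 1) - (2:ℝ) ^ N)) * D := by
            rw [← mul_assoc, ← Real.rpow_add (by norm_num : (0:ℝ) < 2)]
            congr 2
            rw [pow_succ]
            ring
  set C : ℝ := max 1 (2 ^ ((st - 1) * (2:ℝ) ^ N) * D) with hCdef
  have hC1 : (1:ℝ) ≤ C := le_max_left _ _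
  obtain ⟨m, hm, hCm⟩ := Filter.frequently_atTop.mp (hX C) (2 ^ (N + 1))
  have hmne : m ≠ 0 := by
    have : 1 ≤ 2 ^ (N + 1) := Nat.one_le_two_pow
    omega
  set k : ℕ := Nat.log 2 m with hkdef
  have hk1 : 2 ^ k ≤ m := Nat.pow_log_le_self 2 hmne
  have hk2 : m < 2 ^ (k + 1) := Nat.lt_pow_succ_log_self (by norm_num) m
  have hkN : N + 1 ≤ k := (Nat.le_log_iff_pow_le (by norm_num) hmne).mpr hm
  set ℓ : ℕ := m - 2 ^ k with hldef
  have hmeq : m = 2 ^ k + ℓ := by omega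
  have hl2 : ℓ ≤ 2 ^ k := by
    have : 2 ^ (k + 1) = 2 * 2 ^ k := by ring
    omega
  have hmcast : (m : ℝ) = (2:ℝ) ^ k + (ℓ : ℝ) := by
    rw [hmeq]; push_cast; ring
  have hrpos : (0:ℝ) < 2 ^ ((1 - s'') * (m : ℝ)) := Real.rpow_pos_of_pos (by norm_num) _
  have hmain : d (pre X m) ≤ C * 2 ^ ((1 - s'') * (m : ℝ)) := by
    have hB := (not_or.mp (hN (k + 1) (by omega))).2
    push_neg at hB
    simp only [Nat.add_sub_cancel] at hB
    by_cases h2 : ((st - s'') / s'') * (2:ℝ) ^ k ≤ (ℓ : ℝ)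
    · have hb := hB ℓ h2 hl2
      calc d (pre X m) = d (pre X (2 ^ k + ℓ)) := by rw [hmeq]
        _ ≤ 2 ^ ((1 - s'') * ((2:ℝ) ^ k + (ℓ : ℝ))) := hb
        _ = 2 ^ ((1 - s'') * (m : ℝ)) := by rw [hmcast]
        _ ≤ C * 2 ^ ((1 - s'') * (m : ℝ)) := by nlinarith
    · push_neg at h2
      have key : (ℓ : ℝ) * s'' < (st - s'') * (2:ℝ) ^ k := by
        rw [div_mul_eq_mul_div] at h2
        exact (lt_div_iff₀ h0).mp h2
      have step1 : d (pre X m) ≤ (2:ℝ) ^ ℓ * d (pre X (2 ^ k)) := by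
        rw [hmeq]; exact d_add d hnonneg hmart X (2 ^ k) ℓ
      have step2 : d (pre X m) ≤ (2:ℝ) ^ ℓ * (2 ^ ((1 - st) * ((2:ℝ) ^ k - (2:ℝ) ^ N)) * D) := by
        refine step1.trans (mul_le_mul_of_nonneg_left (hpow k (by omega)) (by positivity))
      have e1 : (2:ℝ) ^ ℓ * (2 ^ ((1 - st) * ((2:ℝ) ^ k - (2:ℝ) ^ N)) * D)
          = 2 ^ ((ℓ : ℝ) + (1 - st) * ((2:ℝ) ^ k - (2:ℝ) ^ N)) * D := by
        rw [Real.rpow_add (by norm_num : (0:ℝ) < 2), Real.rpow_natCast, mul_assoc]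
      have eexp : (ℓ : ℝ) + (1 - st) * ((2:ℝ) ^ k - (2:ℝ) ^ N)
          ≤ (st - 1) * (2:ℝ) ^ N + (1 - s'') * (m : ℝ) := by
        rw [hmcast]; nlinarith [key]
      have e2 : (2:ℝ) ^ ((ℓ : ℝ) + (1 - st) * ((2:ℝ) ^ k - (2:ℝ) ^ N)) * D
          ≤ 2 ^ ((st - 1) * (2:ℝ) ^ N + (1 - s'') * (m : ℝ)) * D := by
        exact mul_le_mul_of_nonneg_right
          (Real.rpow_le_rpow_of_exponent_le (by norm_num) eexp) hD
      have e3 : (2:ℝ) ^ ((st - 1) * (2:ℝ) ^ N + (1 - s'') * (m : ℝ)) * D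
          = (2 ^ ((st - 1) * (2:ℝ) ^ N) * D) * 2 ^ ((1 - s'') * (m : ℝ)) := by
        rw [Real.rpow_add (by norm_num : (0:ℝ) < 2)]
        ring
      have e4 : (2:ℝ) ^ ((st - 1) * (2:ℝ) ^ N) * D ≤ C := le_max_right _ _
      calc d (pre X m) ≤ 2 ^ ((ℓ : ℝ) + (1 - st) * ((2:ℝ) ^ k - (2:ℝ) ^ N)) * D := by
            rw [← e1]; exact step2
        _ ≤ 2 ^ ((st - 1) * (2:ℝ) ^ N + (1 - s'') * (m : ℝ)) * D := e2
        _ = (2 ^ ((st - 1) * (2:ℝ) ^ N) * D) * 2 ^ ((1 - s'') * (m : ℝ)) := e3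
        _ ≤ C * 2 ^ ((1 - s'') * (m : ℝ)) := by nlinarith
  have := (lt_div_iff₀ hrpos).mp hCm
  linarith
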